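/- The group ℝ with the Archimedean norm |x| = abs(x) has nonbranching optimal transport plans: for every g_1,…,g_n ∈ ℝ with Σ g_i = 0 there exist real numbers g_{ij} with g_{ij} = -g_{ji}, g_{ii} = 0, g_i = Σ_j g_{ij}, and |g_i| = Σ_j |g_{ij}| for all i. -/

import Mathlib

def IsGroupNorm {G : Type*} [AddCommGroup G] (ν : G → ℝ) : Prop :=
  (∀ g, 0 ≤ ν g) ∧ (∀ g h, ν (g + h) ≤ ν g + ν h) ∧
  (∀ g, ν (-g) = ν g) ∧ (∀ g, ν g = 0 ↔ g = 0)

def HasNBP {G : Type*} [AddCommGroup G] (ν : G → ℝ) : Prop :=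
  ∀ (n : ℕ) (g : Fin n → G), (∑ i, g i) = 0 →
    ∃ f : Fin n → Fin n → G,
      (∀ i j, f i j = - f j i) ∧ (∀ i, f i i = 0) ∧
      (∀ i, g i = ∑ j, f i j) ∧ (∀ i, ν (g i) = ∑ j, ν (f i j))

def HasCZT {G : Type*} [AddCommGroup G] (ν : G → ℝ) : Prop :=
  ∀ a b c : G, a + b + c = 0 →
    ν a + ν b = ν c ∨ ν a + ν c = ν b ∨ ν b + ν c = ν a

def IsIndecomposable {G : Type*} [AddCommGroup G] (ν : G → ℝ) (g : G) : Prop :=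
  ∀ h : G, ν h + ν (g - h) = ν g → h = 0 ∨ h = g

theorem stmt2 : HasNBP (fun x : ℝ => |x|) := by
  intro n g hg
  set p : Fin n → ℝ := fun i => max (g i) 0 with hp
  set q : Fin n → ℝ := fun i => max (-g i) 0 with hq
  have hpq : ∀ i, p i - q i = g i := by
    intro i
    rcases le_total (g i) 0 with h | h
    · simp [hp, hq, max_eq_right h, max_eq_left (neg_nonneg.2 h)]
    · simp [hp, hq, max_eq_left h, max_eq_right (neg_nonpos.2 h)]
  have habs : ∀ i, p i + q i = |g i| := by
    intro i
    rcases le_total (g i) 0 with h | h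
    · simp [hp, hq, max_eq_right h, max_eq_left (neg_nonneg.2 h), abs_of_nonpos h]
    · simp [hp, hq, max_eq_left h, max_eq_right (neg_nonpos.2 h), abs_of_nonneg h]
  have hmul : ∀ i, p i * q i = 0 := by
    intro i
    rcases le_total (g i) 0 with h | h
    · simp [hp, max_eq_right h]
    · simp [hq, max_eq_right (neg_nonpos.2 h)]
  have hpnn : ∀ i, 0 ≤ p i := fun i => le_max_right _ _
  have hqnn : ∀ i, 0 ≤ q i := fun i => le_max_right _ _
  set S : ℝ := ∑ i, p i with hS
  have hSq : ∑ i, q i = S := by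
    have h1 : ∑ i, (p i - q i) = 0 := by
      calc ∑ i, (p i - q i) = ∑ i, g i := by
            exact Finset.sum_congr rfl fun i _ => hpq i
        _ = 0 := hg
    rw [Finset.sum_sub_distrib] at h1
    linarith
  rcases eq_or_lt_of_le (Finset.sum_nonneg fun i _ => hpnn i : (0:ℝ) ≤ S) with h0 | hSpos
  · have hz : ∀ i, g i = 0 := by
      intro i
      have hp0 : p i = 0 :=
        (Finset.sum_eq_zero_iff_of_nonneg fun i _ => hpnn i).mp h0.symm i (Finset.mem_univ i)
      have hq0 : q i = 0 := by
        have := (Finset.sum_eq_zero_iff_of_nonneg fun i _ => hqnn i).mp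
          (hSq.trans h0.symm) i (Finset.mem_univ i)
        exact this
      have := hpq i
      linarith
    exact ⟨fun _ _ => 0, by simp, by simp, fun i => by simp [hz i], fun i => by simp [hz i]⟩
  · refine ⟨fun i j => (p i * q j - q i * p j) / S, ?_, ?_, ?_, ?_⟩
    · intro i j; ring
    · intro i
      show (p i * q i - q i * p i) / S = 0
      have : p i * q i - q i * p i = 0 := by ring
      rw [this, zero_div]
    · intro i
      rw [← Finset.sum_div]
      have h2 : ∑ j, (p i * q j - q i * p j) = p i * S - q i * S := by
        rw [Finset.sum_sub_distrib, ← Finset.mul_sum, ← Finset.mul_sum, hSq, hS]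
      rw [h2, ← hpq i]
      field_simp
      rw [mul_div_cancel_right₀ _ (show S ≠ 0 from hSpos.ne')]
    · intro i
      have habsf : ∀ j, |(p i * q j - q i * p j) / S| = (p i * q j + q i * p j) / S := by
        intro j
        rw [abs_div, abs_of_pos hSpos]
        congr 1
        have hz : (p i * q j) * (q i * p j) = 0 := by
          have h3 : (p i * q j) * (q i * p j) = (p i * q i) * (q j * p j) := by ring
          rw [h3, hmul i, zero_mul]
        rcases mul_eq_zero.mp hz with h | h
        · rw [h, zero_sub, abs_neg, abs_of_nonneg (mul_nonneg (hqnn i) (hpnn j)), zero_add]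
        · rw [h]
          simp [abs_of_nonneg (mul_nonneg (hpnn i) (hqnn j))]
      simp only [habsf]
      rw [← Finset.sum_div]
      have h5 : ∑ j, (p i * q j + q i * p j) = p i * S + q i * S := by
        rw [Finset.sum_add_distrib, ← Finset.mul_sum, ← Finset.mul_sum, hSq, hS]
      rw [h5, ← habs i]
      field_simp
      rw [mul_div_cancel_right₀ _ (show S ≠ 0 from hSpos.ne')]
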